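/- Spectral gap inequality for symmetric simple exclusion on a segment (Proposition 4.3). There exists a universal constant κ₀ such that for every ℓ ∈ ℕ, every ρ ∈ [0,1], and every function f : {0,1}^ℤ → ℝ which is local with supp(f) ⊆ {1,…,ℓ} and satisfies φ_f(β) = 0 for every β ∈ [0,1], one has ∫ f² dν_ρ ≤ κ₀ ℓ² E_ℓ(f), where E_ℓ(f) = Σ_{x=1}^{ℓ−1} ∫ (∇_{x,x+1} f)² dν_ρ. -/

import Mathlib

open MeasureTheory Finset

noncomputable section

/-- Configurations of the lattice gas: elements of `{0,1}^ℤ`, encoded as `ℤ → Bool`. -/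
abbrev Cfg : Type := ℤ → Bool

/-- The configuration whose occupied sites are exactly the finite set `S`. -/
def cfgOf (S : Finset ℤ) : Cfg := fun z => decide (z ∈ S)

/-- `f` depends only on the coordinates in the finite set `A`
(i.e. `f` is local with `supp f ⊆ A`). -/
def LocalOn (A : Finset ℤ) (f : Cfg → ℝ) : Prop :=
  ∀ η ξ : Cfg, (∀ x ∈ A, η x = ξ x) → f η = f ξ

/-- `f` is a local function. -/
def IsLocal (f : Cfg → ℝ) : Prop := ∃ A : Finset ℤ, LocalOn A f

/-- For `f` depending only on the coordinates in `A`, `phi A f β = ∫ f dν_β` where `ν_β`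
is the Bernoulli product measure of density `β`; written as an explicit polynomial in `β`. -/
def phi (A : Finset ℤ) (f : Cfg → ℝ) (β : ℝ) : ℝ :=
  ∑ S ∈ A.powerset, β ^ S.card * (1 - β) ^ (A.card - S.card) * f (cfgOf S)

/-- `ψ_f(ℓ; m)`: the average of `f` over all configurations of `{1,…,ℓ}`
having exactly `m` particles. -/
def condAvg (ℓ m : ℕ) (f : Cfg → ℝ) : ℝ :=
  (∑ S ∈ (Finset.Icc (1 : ℤ) (ℓ : ℤ)).powerset.filter (fun S => S.card = m), f (cfgOf S))
    / (ℓ.choose m : ℝ)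

/-- `μ` is the product Bernoulli measure on `{0,1}^ℤ` of density `ρ`: it is a probability
measure under which the coordinates are i.i.d. with `μ(η x = 1) = ρ`. -/
def IsBernoulliProduct (ρ : ℝ) (μ : Measure Cfg) : Prop :=
  IsProbabilityMeasure μ ∧
    ∀ (A : Finset ℤ) (σ : Cfg),
      (μ {η : Cfg | ∀ x ∈ A, η x = σ x}).toReal
        = ∏ x ∈ A, (if σ x then ρ else 1 - ρ)

/-- The number of particles of `η` in `{1,…,ℓ}`. -/
def numOnes (ℓ : ℕ) (η : Cfg) : ℕ := ∑ x ∈ Finset.Icc (1 : ℤ) (ℓ : ℤ), (η x).toNat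

/-- The empirical density `η^ℓ` of particles in `{1,…,ℓ}`. -/
def empDens (ℓ : ℕ) (η : Cfg) : ℝ := (numOnes ℓ η : ℝ) / (ℓ : ℝ)

/-- `ψ_f(ℓ)`: the conditional expectation of `f` given the particle number in `{1,…,ℓ}`,
as a function on configurations. -/
def psiFun (ℓ : ℕ) (f : Cfg → ℝ) : Cfg → ℝ := fun η => condAvg ℓ (numOnes ℓ η) f

/-- The variance of `g` with respect to the measure `μ`. -/
def Var (μ : Measure Cfg) (g : Cfg → ℝ) : ℝ := ∫ η, (g η - ∫ ξ, g ξ ∂μ) ^ 2 ∂μ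

/-- The configuration `η^{x,y}`, obtained from `η` by exchanging coordinates `x` and `y`. -/
def swapCfg (x y : ℤ) (η : Cfg) : Cfg :=
  fun z => if z = x then η y else if z = y then η x else η z

/-- `∇_{x,y} f (η) = f(η^{x,y}) - f(η)`. -/
def discGrad (x y : ℤ) (f : Cfg → ℝ) : Cfg → ℝ := fun η => f (swapCfg x y η) - f η


section SGHelpers

set_option maxHeartbeats 1000000




/-- positions `{1,…,n}` as integers -/
def SGpos (n : ℕ) : Finset ℤ := Finset.Icc 1 (n : ℤ)

/-- the slice: subsets of `{1,…,n}` with `m` elements -/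
def SGsl (n m : ℕ) : Finset (Finset ℤ) := Finset.powersetCard m (SGpos n)

/-- swap action on finsets -/
def SGsw (x y : ℤ) (S : Finset ℤ) : Finset ℤ := S.image (Equiv.swap x y)

lemma SGmem_sw {x y z : ℤ} {S : Finset ℤ} : z ∈ SGsw x y S ↔ Equiv.swap x y z ∈ S := by
  simp only [SGsw, Finset.mem_image]
  constructor
  · rintro ⟨a, ha, rfl⟩; rwa [Equiv.swap_apply_self]
  · intro h; exact ⟨_, h, Equiv.swap_apply_self _ _ _⟩

lemma SGsw_sw (x y : ℤ) (S : Finset ℤ) : SGsw x y (SGsw x y S) = S := by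
  ext z; simp [SGmem_sw, Equiv.swap_apply_self]

lemma SGsw_card (x y : ℤ) (S : Finset ℤ) : (SGsw x y S).card = S.card :=
  Finset.card_image_of_injective _ (Equiv.injective _)

lemma SGsw_mem_slice {n m : ℕ} {x y : ℤ} {S : Finset ℤ} (hx : x ∈ SGpos n) (hy : y ∈ SGpos n)
    (hS : S ∈ SGsl n m) : SGsw x y S ∈ SGsl n m := by
  rw [SGsl, Finset.mem_powersetCard] at hS ⊢
  refine ⟨fun z hz => ?_, by rw [SGsw_card]; exact hS.2⟩
  rw [SGmem_sw] at hz
  rcases eq_or_ne z x with rfl | hzx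
  · exact hx
  rcases eq_or_ne z y with rfl | hzy
  · exact hy
  · rw [Equiv.swap_apply_of_ne_of_ne hzx hzy] at hz; exact hS.1 hz

/-- reindexing a sum over a slice by the swap -/
lemma SGsum_sw {n m : ℕ} {x y : ℤ} (hx : x ∈ SGpos n) (hy : y ∈ SGpos n)
    (h : Finset ℤ → ℝ) :
    ∑ S ∈ SGsl n m, h (SGsw x y S) = ∑ S ∈ SGsl n m, h S := by
  apply Finset.sum_nbij' (fun S => SGsw x y S) (fun S => SGsw x y S)
  · intro a ha; exact SGsw_mem_slice hx hy ha
  · intro a ha; exact SGsw_mem_slice hx hy ha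
  · intro a _; exact SGsw_sw x y a
  · intro a _; exact SGsw_sw x y a
  · intro a _; rfl

/-- Dirichlet edge term -/
def SGE (n m : ℕ) (f : Finset ℤ → ℝ) (x : ℤ) : ℝ :=
  ∑ S ∈ SGsl n m, (f (SGsw x (x + 1) S) - f S) ^ 2

/-- full Dirichlet sum -/
def SGD (n m : ℕ) (f : Finset ℤ → ℝ) : ℝ :=
  ∑ x ∈ Finset.Ico (1 : ℤ) (n : ℤ), SGE n m f x

lemma SGE_nonneg (n m : ℕ) (f : Finset ℤ → ℝ) (x : ℤ) : 0 ≤ SGE n m f x :=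
  Finset.sum_nonneg fun _ _ => sq_nonneg _

lemma SGD_nonneg (n m : ℕ) (f : Finset ℤ → ℝ) : 0 ≤ SGD n m f :=
  Finset.sum_nonneg fun _ _ => SGE_nonneg _ _ _ _


/-- conjugation of swaps, pointwise -/
lemma SGswap_conj_pt {x y : ℤ} (hxy : x < y) (z : ℤ) :
    Equiv.swap y (y + 1) (Equiv.swap x y (Equiv.swap y (y + 1) z)) =
      Equiv.swap x (y + 1) z := by
  simp only [Equiv.swap_apply_def]
  split_ifs <;> omega

lemma SGsw_conj {x y : ℤ} (hxy : x < y) (S : Finset ℤ) :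
    SGsw y (y + 1) (SGsw x y (SGsw y (y + 1) S)) = SGsw x (y + 1) S := by
  ext z
  simp only [SGmem_sw]
  rw [SGswap_conj_pt hxy]

/-- weighted Cauchy–Schwarz for three terms -/
lemma SGcs3 (a b c r : ℝ) (hr : 0 < r) :
    (a + b + c) ^ 2 ≤ (r + 2) * (a ^ 2 + c ^ 2) + ((r + 2) / r) * b ^ 2 := by
  have hr' : r ≠ 0 := ne_of_gt hr
  have key : r * ((a + b + c) ^ 2) ≤ r * ((r + 2) * (a ^ 2 + c ^ 2) + ((r + 2) / r) * b ^ 2) := by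
    have hb : r * (((r + 2) / r) * b ^ 2) = (r + 2) * b ^ 2 := by field_simp
    nlinarith [sq_nonneg (a - c), sq_nonneg (r * a - b), sq_nonneg (r * c - b)]
  exact (mul_le_mul_iff_right₀ hr).mp key


lemma SGmem_pos {n : ℕ} {z : ℤ} : z ∈ SGpos n ↔ 1 ≤ z ∧ z ≤ (n : ℤ) := by
  simp [SGpos]

/-- long-range gradient bound along a path of nearest-neighbour swaps -/
lemma SGlongrange (n m : ℕ) (f : Finset ℤ → ℝ) (x : ℤ) (hx : 1 ≤ x) :
    ∀ d : ℕ, 1 ≤ d → x + (d : ℤ) ≤ (n : ℤ) →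
      ∑ S ∈ SGsl n m, (f (SGsw x (x + (d : ℤ)) S) - f S) ^ 2 ≤
        (2 * (d : ℝ) - 1) *
          (SGE n m f x + 2 * ∑ j ∈ Finset.range (d - 1), SGE n m f (x + 1 + (j : ℤ))) := by
  intro d hd1
  induction d, hd1 using Nat.le_induction with
  | base =>
      intro h
      simp only [Nat.cast_one, Nat.sub_self, Finset.range_zero, Finset.sum_empty, mul_zero,
        add_zero]
      norm_num [SGE]
  | succ d hd IH =>
      intro hn
      have hdn : x + (d : ℤ) ≤ (n : ℤ) := by push_cast at hn ⊢; omega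
      set y : ℤ := x + (d : ℤ) with hy
      have hd' : (1:ℤ) ≤ (d:ℤ) := by exact_mod_cast hd
      have hxy : x < y := by omega
      have hy1 : y + 1 ≤ (n : ℤ) := by push_cast at hn; omega
      have hxpos : x ∈ SGpos n := SGmem_pos.mpr ⟨hx, by omega⟩
      have hypos : y ∈ SGpos n := SGmem_pos.mpr ⟨by omega, by omega⟩
      have hy1pos : y + 1 ∈ SGpos n := SGmem_pos.mpr ⟨by omega, hy1⟩
      have hcast : x + ((d : ℕ) + 1 : ℕ) = y + 1 := by push_cast; ring
      set r : ℝ := 2 * (d : ℝ) - 1 with hr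
      have hrpos : 0 < r := by
        have : (1 : ℝ) ≤ (d : ℝ) := by exact_mod_cast hd
        rw [hr]; linarith
      set W : ℝ := SGE n m f x + 2 * ∑ j ∈ Finset.range (d - 1), SGE n m f (x + 1 + (j : ℤ))
        with hW
      have hsum1 : ∑ S ∈ SGsl n m, (f (SGsw x (x + ((d : ℕ) + 1 : ℕ)) S) - f S) ^ 2
          ≤ ∑ S ∈ SGsl n m,
              ((r + 2) * ((f (SGsw y (y + 1) (SGsw x y (SGsw y (y + 1) S)))
                    - f (SGsw x y (SGsw y (y + 1) S))) ^ 2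
                  + (f (SGsw y (y + 1) S) - f S) ^ 2)
                + ((r + 2) / r) * (f (SGsw x y (SGsw y (y + 1) S)) - f (SGsw y (y + 1) S)) ^ 2) := by
        apply Finset.sum_le_sum
        intro S _
        have hde : f (SGsw x (x + ((d : ℕ) + 1 : ℕ)) S) - f S
            = (f (SGsw y (y + 1) (SGsw x y (SGsw y (y + 1) S)))
                  - f (SGsw x y (SGsw y (y + 1) S)))
              + (f (SGsw x y (SGsw y (y + 1) S)) - f (SGsw y (y + 1) S))
              + (f (SGsw y (y + 1) S) - f S) := by
          rw [hcast, ← SGsw_conj hxy S]; ring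
        rw [hde]
        have := SGcs3 (f (SGsw y (y + 1) (SGsw x y (SGsw y (y + 1) S)))
            - f (SGsw x y (SGsw y (y + 1) S)))
          (f (SGsw x y (SGsw y (y + 1) S)) - f (SGsw y (y + 1) S))
          (f (SGsw y (y + 1) S) - f S) r hrpos
        linarith
      have hAsum : ∑ S ∈ SGsl n m,
          (f (SGsw y (y + 1) (SGsw x y (SGsw y (y + 1) S)))
              - f (SGsw x y (SGsw y (y + 1) S))) ^ 2 = SGE n m f y := by
        have e1 := SGsum_sw (n := n) (m := m) hypos hy1pos
          (fun U => (f (SGsw y (y + 1) (SGsw x y U)) - f (SGsw x y U)) ^ 2)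
        have e2 := SGsum_sw (n := n) (m := m) hxpos hypos
          (fun U => (f (SGsw y (y + 1) U) - f U) ^ 2)
        exact e1.trans e2
      have hBsum : ∑ S ∈ SGsl n m,
          (f (SGsw x y (SGsw y (y + 1) S)) - f (SGsw y (y + 1) S)) ^ 2 ≤ r * W := by
        have e1 := SGsum_sw (n := n) (m := m) hypos hy1pos
          (fun U => (f (SGsw x y U) - f U) ^ 2)
        calc ∑ S ∈ SGsl n m, (f (SGsw x y (SGsw y (y + 1) S)) - f (SGsw y (y + 1) S)) ^ 2
            = ∑ S ∈ SGsl n m, (f (SGsw x y S) - f S) ^ 2 := e1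
          _ ≤ r * W := IH hdn
      have hsplit : ∑ S ∈ SGsl n m,
          ((r + 2) * ((f (SGsw y (y + 1) (SGsw x y (SGsw y (y + 1) S)))
                - f (SGsw x y (SGsw y (y + 1) S))) ^ 2
              + (f (SGsw y (y + 1) S) - f S) ^ 2)
            + ((r + 2) / r) * (f (SGsw x y (SGsw y (y + 1) S)) - f (SGsw y (y + 1) S)) ^ 2)
          = (r + 2) * (∑ S ∈ SGsl n m,
              (f (SGsw y (y + 1) (SGsw x y (SGsw y (y + 1) S)))
                  - f (SGsw x y (SGsw y (y + 1) S))) ^ 2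
              + ∑ S ∈ SGsl n m, (f (SGsw y (y + 1) S) - f S) ^ 2)
            + ((r + 2) / r) * ∑ S ∈ SGsl n m,
                (f (SGsw x y (SGsw y (y + 1) S)) - f (SGsw y (y + 1) S)) ^ 2 := by
        rw [Finset.sum_add_distrib, ← Finset.mul_sum, ← Finset.mul_sum, Finset.sum_add_distrib]
      have hCsum : ∑ S ∈ SGsl n m, (f (SGsw y (y + 1) S) - f S) ^ 2 = SGE n m f y := rfl
      have hwin : SGE n m f x + 2 * ∑ j ∈ Finset.range ((d + 1) - 1), SGE n m f (x + 1 + (j : ℤ))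
          = W + 2 * SGE n m f y := by
        have h1 : (d + 1) - 1 = (d - 1) + 1 := by omega
        rw [h1, Finset.sum_range_succ]
        have h2 : x + 1 + ((d - 1 : ℕ) : ℤ) = y := by
          rw [hy]; push_cast [Nat.cast_sub hd]; ring
        rw [h2, hW]; ring
      have hdiv : ((r + 2) / r) * (r * W) = (r + 2) * W := by
        field_simp
      have hfrac : 0 ≤ (r + 2) / r := by positivity
      have hErnn : 0 ≤ SGE n m f y := SGE_nonneg _ _ _ _
      calc ∑ S ∈ SGsl n m, (f (SGsw x (x + ((d : ℕ) + 1 : ℕ)) S) - f S) ^ 2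
          ≤ (r + 2) * (SGE n m f y + SGE n m f y) + ((r + 2) / r) * (r * W) := by
            rw [hsplit, hAsum, hCsum] at hsum1
            have := mul_le_mul_of_nonneg_left hBsum hfrac
            linarith
        _ = (r + 2) * (W + 2 * SGE n m f y) := by rw [hdiv]; ring
        _ = (2 * ((d:ℝ) + 1) - 1) * (W + 2 * SGE n m f y) := by rw [hr]; ring
        _ = (2 * (((d + 1 : ℕ)) : ℝ) - 1) *
              (SGE n m f x
                + 2 * ∑ j ∈ Finset.range ((d + 1) - 1), SGE n m f (x + 1 + (j : ℤ))) := by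
            rw [hwin]; push_cast; ring

/-- long-range bound in terms of the full Dirichlet form -/
lemma SGlongrange2 (n m : ℕ) (f : Finset ℤ → ℝ) (x y : ℤ) (hx : 1 ≤ x) (hxy : x < y)
    (hyn : y ≤ (n : ℤ)) :
    ∑ S ∈ SGsl n m, (f (SGsw x y S) - f S) ^ 2 ≤ 4 * ((y : ℝ) - (x : ℝ)) * SGD n m f := by
  set d : ℕ := (y - x).toNat with hd
  have hdz : (d : ℤ) = y - x := Int.toNat_of_nonneg (by omega)
  have hd1 : 1 ≤ d := by omega
  have hxd : x + (d : ℤ) = y := by omega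
  have hbound := SGlongrange n m f x hx d hd1 (by omega)
  rw [hxd] at hbound
  have hwin : SGE n m f x + 2 * ∑ j ∈ Finset.range (d - 1), SGE n m f (x + 1 + (j : ℤ))
      ≤ 2 * SGD n m f := by
    have hsum : SGE n m f x + ∑ j ∈ Finset.range (d - 1), SGE n m f (x + 1 + (j : ℤ))
        = ∑ j ∈ Finset.range d, SGE n m f (x + (j : ℤ)) := by
      have hdd : d = (d - 1) + 1 := by omega
      rw [hdd, Finset.sum_range_succ']
      simp only [Nat.cast_zero, add_zero, Nat.cast_add, Nat.cast_one]
      rw [add_comm]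
      congr 1
      apply Finset.sum_congr rfl
      intro j _
      congr 1
      push_cast
      ring
    have hrange : ∑ j ∈ Finset.range d, SGE n m f (x + (j : ℤ))
        = ∑ z ∈ Finset.Ico x (x + (d : ℤ)), SGE n m f z := by
      refine Finset.sum_nbij' (i := fun j => x + (j : ℤ)) (j := fun z => (z - x).toNat)
        ?_ ?_ ?_ ?_ ?_
      · intro j hj
        simp only [Finset.mem_Ico]
        have := Finset.mem_range.mp hj
        omega
      · intro z hz
        simp only [Finset.mem_Ico] at hz
        simp only [Finset.mem_range]
        omega
      · intro j _
        show (x + (j : ℤ) - x).toNat = j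
        omega
      · intro z hz
        simp only [Finset.mem_Ico] at hz
        show x + ((z - x).toNat : ℤ) = z
        omega
      · intro j _; rfl
    have hsubset : ∑ z ∈ Finset.Ico x (x + (d : ℤ)), SGE n m f z ≤ SGD n m f := by
      apply Finset.sum_le_sum_of_subset_of_nonneg
      · intro z hz
        simp only [Finset.mem_Ico] at hz ⊢
        omega
      · intro z _ _; exact SGE_nonneg _ _ _ _
    have hE : 0 ≤ SGE n m f x := SGE_nonneg _ _ _ _
    have hS : 0 ≤ ∑ j ∈ Finset.range (d - 1), SGE n m f (x + 1 + (j : ℤ)) :=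
      Finset.sum_nonneg fun _ _ => SGE_nonneg _ _ _ _
    nlinarith [hsum, hrange, hsubset]
  have hcoef : (2 * (d : ℝ) - 1) ≤ 2 * ((y:ℝ) - (x:ℝ)) := by
    have hcast : (d : ℝ) = (y:ℝ) - (x:ℝ) := by exact_mod_cast hdz
    rw [hcast]; linarith
  have hWnn : 0 ≤ SGE n m f x + 2 * ∑ j ∈ Finset.range (d - 1), SGE n m f (x + 1 + (j : ℤ)) := by
    have hE : 0 ≤ SGE n m f x := SGE_nonneg _ _ _ _
    have hS : 0 ≤ ∑ j ∈ Finset.range (d - 1), SGE n m f (x + 1 + (j : ℤ)) :=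
      Finset.sum_nonneg fun _ _ => SGE_nonneg _ _ _ _
    linarith
  have hrnn : (0:ℝ) ≤ 2 * (d:ℝ) - 1 := by
    have : (1:ℝ) ≤ (d:ℝ) := by exact_mod_cast hd1
    linarith
  calc ∑ S ∈ SGsl n m, (f (SGsw x y S) - f S) ^ 2
      ≤ (2 * (d : ℝ) - 1) *
          (SGE n m f x + 2 * ∑ j ∈ Finset.range (d - 1), SGE n m f (x + 1 + (j : ℤ))) := hbound
    _ ≤ (2 * ((y:ℝ) - (x:ℝ))) * (2 * SGD n m f) := by
        apply mul_le_mul hcoef hwin hWnn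
        linarith
    _ = 4 * ((y : ℝ) - (x : ℝ)) * SGD n m f := by ring


lemma SGnotmem_last {n k : ℕ} {T : Finset ℤ} (hT : T ∈ SGsl n k) : ((n:ℤ)+1) ∉ T := by
  rw [SGsl, Finset.mem_powersetCard] at hT
  intro h
  have := hT.1 h
  rw [SGmem_pos] at this
  omega

lemma SGinsert_mem {n mm : ℕ} {T : Finset ℤ} (hT : T ∈ SGsl n mm) :
    insert ((n:ℤ)+1) T ∈ SGsl (n+1) (mm+1) := by
  have hnot := SGnotmem_last hT
  rw [SGsl, Finset.mem_powersetCard] at hT ⊢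
  constructor
  · intro z hz
    rw [Finset.mem_insert] at hz
    rw [SGmem_pos]
    rcases hz with rfl | hz
    · push_cast; omega
    · have := hT.1 hz; rw [SGmem_pos] at this; push_cast; omega
  · rw [Finset.card_insert_of_notMem hnot, hT.2]

lemma SGslice_split (n mm : ℕ) :
    SGsl (n+1) (mm+1) = (SGsl n mm).image (insert ((n:ℤ)+1)) ∪ SGsl n (mm+1) := by
  ext S
  simp only [Finset.mem_union, Finset.mem_image]
  constructor
  · intro hS
    rw [SGsl, Finset.mem_powersetCard] at hS
    by_cases hmem : ((n:ℤ)+1) ∈ S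
    · left
      refine ⟨S.erase ((n:ℤ)+1), ?_, Finset.insert_erase hmem⟩
      rw [SGsl, Finset.mem_powersetCard]
      constructor
      · intro z hz
        rw [Finset.mem_erase] at hz
        have := hS.1 hz.2
        rw [SGmem_pos] at this ⊢
        have hne := hz.1
        push_cast at this
        omega
      · rw [Finset.card_erase_of_mem hmem, hS.2]
        omega
    · right
      rw [SGsl, Finset.mem_powersetCard]
      constructor
      · intro z hz
        have := hS.1 hz
        rw [SGmem_pos] at this ⊢
        have : z ≠ (n:ℤ)+1 := fun h => hmem (h ▸ hz)
        push_cast at *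
        omega
      · exact hS.2
  · rintro (⟨T, hT, rfl⟩ | hS)
    · exact SGinsert_mem hT
    · rw [SGsl, Finset.mem_powersetCard] at hS ⊢
      refine ⟨fun z hz => ?_, hS.2⟩
      have := hS.1 hz
      rw [SGmem_pos] at this ⊢
      push_cast
      omega

lemma SGslice_disj (n mm : ℕ) :
    Disjoint ((SGsl n mm).image (insert ((n:ℤ)+1))) (SGsl n (mm+1)) := by
  rw [Finset.disjoint_left]
  rintro S hS hS'
  rw [Finset.mem_image] at hS
  obtain ⟨T, hT, rfl⟩ := hS
  exact SGnotmem_last hS' (Finset.mem_insert_self _ _)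

lemma SGsum_split (n mm : ℕ) (h : Finset ℤ → ℝ) :
    ∑ S ∈ SGsl (n+1) (mm+1), h S
      = ∑ T ∈ SGsl n mm, h (insert ((n:ℤ)+1) T) + ∑ S ∈ SGsl n (mm+1), h S := by
  rw [SGslice_split n mm, Finset.sum_union (SGslice_disj n mm), Finset.sum_image]
  intro T hT T' hT' he
  have h1 := SGnotmem_last hT
  have h2 := SGnotmem_last hT'
  have : (insert ((n:ℤ)+1) T).erase ((n:ℤ)+1) = (insert ((n:ℤ)+1) T').erase ((n:ℤ)+1) := by
    rw [he]
  rwa [Finset.erase_insert h1, Finset.erase_insert h2] at this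

lemma SGcard_pos (n : ℕ) : (SGpos n).card = n := by
  rw [SGpos, Int.card_Icc]
  omega

lemma SGcard_slice (n k : ℕ) : (SGsl n k).card = n.choose k := by
  rw [SGsl, Finset.card_powersetCard, SGcard_pos]

lemma SGE_insert (n mm : ℕ) (f : Finset ℤ → ℝ) (x : ℤ) (hx : x ∈ Finset.Ico (1:ℤ) (n:ℤ)) :
    SGE (n+1) (mm+1) f x
      = SGE n mm (fun T => f (insert ((n:ℤ)+1) T)) x + SGE n (mm+1) f x := by
  rw [Finset.mem_Ico] at hx
  rw [SGE, SGsum_split n mm]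
  congr 1
  apply Finset.sum_congr rfl
  intro T _
  have hswap : SGsw x (x+1) (insert ((n:ℤ)+1) T) = insert ((n:ℤ)+1) (SGsw x (x+1) T) := by
    rw [SGsw, Finset.image_insert, Equiv.swap_apply_of_ne_of_ne (by omega) (by omega)]
    rfl
  rw [hswap]

lemma SGD_split (n mm : ℕ) (f : Finset ℤ → ℝ) :
    SGD n mm (fun T => f (insert ((n:ℤ)+1) T)) + SGD n (mm+1) f ≤ SGD (n+1) (mm+1) f := by
  rw [SGD, SGD, SGD, ← Finset.sum_add_distrib]
  have hcast : ((n+1 : ℕ) : ℤ) = (n : ℤ) + 1 := by push_cast; ring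
  rw [hcast]
  calc ∑ x ∈ Finset.Ico (1:ℤ) (n:ℤ),
        (SGE n mm (fun T => f (insert ((n:ℤ)+1) T)) x + SGE n (mm+1) f x)
      = ∑ x ∈ Finset.Ico (1:ℤ) (n:ℤ), SGE (n+1) (mm+1) f x := by
        apply Finset.sum_congr rfl
        intro x hx
        rw [SGE_insert n mm f x hx]
    _ ≤ ∑ x ∈ Finset.Ico (1:ℤ) ((n:ℤ)+1), SGE (n+1) (mm+1) f x := by
        apply Finset.sum_le_sum_of_subset_of_nonneg
        · intro z hz
          rw [Finset.mem_Ico] at hz ⊢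
          omega
        · intro z _ _
          exact SGE_nonneg _ _ _ _


lemma SGcard_compl {n mm : ℕ} {T : Finset ℤ} (hT : T ∈ SGsl n mm) :
    (SGpos n \ T).card = n - mm := by
  rw [SGsl, Finset.mem_powersetCard] at hT
  rw [Finset.card_sdiff_of_subset hT.1, SGcard_pos, hT.2]

/-- the m-out-of-(pairs) identity: `∑_{(T,x)} f(insert x T) = (mm+1) ∑_U f U` -/
lemma SGpairs_insert (n mm : ℕ) (f : Finset ℤ → ℝ) :
    ∑ T ∈ SGsl n mm, ∑ x ∈ SGpos n \ T, f (insert x T)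
      = ((mm+1 : ℕ) : ℝ) * ∑ U ∈ SGsl n (mm+1), f U := by
  rw [Finset.sum_sigma' (SGsl n mm) (fun T => SGpos n \ T) (fun T x => f (insert x T))]
  have key : ∑ p ∈ (SGsl n mm).sigma (fun T => SGpos n \ T), f (insert p.2 p.1)
      = ∑ q ∈ (SGsl n (mm+1)).sigma (fun U => U), f q.1 := by
    apply Finset.sum_nbij' (i := fun p => (⟨insert p.2 p.1, p.2⟩ : Σ _ : Finset ℤ, ℤ))
      (j := fun q => (⟨q.1.erase q.2, q.2⟩ : Σ _ : Finset ℤ, ℤ))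
    · rintro ⟨T, x⟩ hp
      rw [Finset.mem_sigma] at hp ⊢
      obtain ⟨hT, hx⟩ := hp
      rw [Finset.mem_sdiff] at hx
      have hTm := hT
      rw [SGsl, Finset.mem_powersetCard] at hTm
      constructor
      · rw [SGsl, Finset.mem_powersetCard]
        constructor
        · intro z hz
          rw [Finset.mem_insert] at hz
          rcases hz with rfl | hz
          · exact hx.1
          · exact hTm.1 hz
        · rw [Finset.card_insert_of_notMem hx.2, hTm.2]
      · exact Finset.mem_insert_self _ _
    · rintro ⟨U, x⟩ hq
      rw [Finset.mem_sigma] at hq ⊢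
      obtain ⟨hU, hx⟩ := hq
      have hUm := hU
      rw [SGsl, Finset.mem_powersetCard] at hUm
      constructor
      · rw [SGsl, Finset.mem_powersetCard]
        constructor
        · exact fun z hz => hUm.1 (Finset.mem_of_mem_erase hz)
        · rw [Finset.card_erase_of_mem hx, hUm.2]
          omega
      · rw [Finset.mem_sdiff]
        exact ⟨hUm.1 hx, Finset.notMem_erase _ _⟩
    · rintro ⟨T, x⟩ hp
      rw [Finset.mem_sigma, Finset.mem_sdiff] at hp
      simp only
      congr 1
      exact Finset.erase_insert hp.2.2
    · rintro ⟨U, x⟩ hq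
      rw [Finset.mem_sigma] at hq
      simp only
      congr 1
      exact Finset.insert_erase hq.2
    · rintro ⟨T, x⟩ _
      rfl
  rw [key, ← Finset.sum_sigma' (SGsl n (mm+1)) (fun U => U) (fun U _ => f U)]
  rw [Finset.mul_sum]
  apply Finset.sum_congr rfl
  intro U hU
  rw [Finset.sum_const]
  have hUm := hU
  rw [SGsl, Finset.mem_powersetCard] at hUm
  rw [hUm.2]
  simp [mul_comm]


lemma SGswap_insert {n mm : ℕ} {T : Finset ℤ} {x : ℤ} (hT : T ∈ SGsl n mm)
    (hx : x ∈ SGpos n \ T) :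
    SGsw x ((n:ℤ)+1) (insert ((n:ℤ)+1) T) = insert x T := by
  rw [Finset.mem_sdiff] at hx
  have hxn : x ≠ (n:ℤ)+1 := by
    have := SGmem_pos.mp hx.1; omega
  have hnT := SGnotmem_last hT
  ext z
  rw [SGmem_sw]
  rcases eq_or_ne z x with rfl | hzx
  · rw [Equiv.swap_apply_left]
    simp
  rcases eq_or_ne z ((n:ℤ)+1) with rfl | hzn
  · rw [Equiv.swap_apply_right]
    simp only [Finset.mem_insert]
    constructor
    · rintro (h | h)
      exacts [absurd h hxn, absurd h hx.2]
    · rintro (h | h)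
      exacts [absurd h.symm hxn, absurd h hnT]
  · rw [Equiv.swap_apply_of_ne_of_ne hzx hzn]
    simp only [Finset.mem_insert]
    constructor
    · rintro (h | h)
      exacts [absurd h hzn, Or.inr h]
    · rintro (h | h)
      exacts [absurd h hzx, Or.inr h]

lemma SGQ2 (n mm : ℕ) (f : Finset ℤ → ℝ) :
    ∑ T ∈ SGsl n mm, ∑ x ∈ SGpos n \ T,
        (f (insert ((n:ℤ)+1) T) - f (insert x T)) ^ 2
      ≤ 4 * (n:ℝ) ^ 2 * SGD (n+1) (mm+1) f := by
  have step1 : ∀ T ∈ SGsl n mm, ∑ x ∈ SGpos n \ T,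
      (f (insert ((n:ℤ)+1) T) - f (insert x T)) ^ 2
      = ∑ x ∈ SGpos n \ T,
        (f (SGsw x ((n:ℤ)+1) (insert ((n:ℤ)+1) T)) - f (insert ((n:ℤ)+1) T)) ^ 2 := by
    intro T hT
    apply Finset.sum_congr rfl
    intro x hx
    rw [SGswap_insert hT hx]
    ring
  rw [Finset.sum_congr rfl step1]
  have step2 : ∑ T ∈ SGsl n mm, ∑ x ∈ SGpos n \ T,
      (f (SGsw x ((n:ℤ)+1) (insert ((n:ℤ)+1) T)) - f (insert ((n:ℤ)+1) T)) ^ 2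
      ≤ ∑ T ∈ SGsl n mm, ∑ x ∈ SGpos n,
        (f (SGsw x ((n:ℤ)+1) (insert ((n:ℤ)+1) T)) - f (insert ((n:ℤ)+1) T)) ^ 2 := by
    apply Finset.sum_le_sum
    intro T _
    apply Finset.sum_le_sum_of_subset_of_nonneg (Finset.sdiff_subset)
    intro _ _ _
    exact sq_nonneg _
  refine step2.trans ?_
  rw [Finset.sum_comm]
  have step3 : ∀ x ∈ SGpos n, ∑ T ∈ SGsl n mm,
      (f (SGsw x ((n:ℤ)+1) (insert ((n:ℤ)+1) T)) - f (insert ((n:ℤ)+1) T)) ^ 2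
      ≤ 4 * (n:ℝ) * SGD (n+1) (mm+1) f := by
    intro x hx
    have hxp := SGmem_pos.mp hx
    have hsub : ∑ T ∈ SGsl n mm,
        (f (SGsw x ((n:ℤ)+1) (insert ((n:ℤ)+1) T)) - f (insert ((n:ℤ)+1) T)) ^ 2
        ≤ ∑ S ∈ SGsl (n+1) (mm+1), (f (SGsw x ((n:ℤ)+1) S) - f S) ^ 2 := by
      rw [SGsum_split n mm (fun S => (f (SGsw x ((n:ℤ)+1) S) - f S) ^ 2)]
      have : (0:ℝ) ≤ ∑ S ∈ SGsl n (mm+1), (f (SGsw x ((n:ℤ)+1) S) - f S) ^ 2 :=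
        Finset.sum_nonneg fun _ _ => sq_nonneg _
      linarith
    refine hsub.trans ?_
    have hlr := SGlongrange2 (n+1) (mm+1) f x ((n:ℤ)+1) hxp.1 (by omega)
      (by push_cast; omega)
    refine hlr.trans ?_
    have hD := SGD_nonneg (n+1) (mm+1) f
    have hb : (((n:ℤ)+1 : ℤ):ℝ) - (x:ℝ) ≤ (n:ℝ) := by
      have : (1:ℝ) ≤ (x:ℝ) := by exact_mod_cast hxp.1
      push_cast
      linarith
    have hmul := mul_le_mul_of_nonneg_right hb hD
    nlinarith [hmul]
  calc ∑ x ∈ SGpos n, ∑ T ∈ SGsl n mm,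
        (f (SGsw x ((n:ℤ)+1) (insert ((n:ℤ)+1) T)) - f (insert ((n:ℤ)+1) T)) ^ 2
      ≤ ∑ x ∈ SGpos n, 4 * (n:ℝ) * SGD (n+1) (mm+1) f := Finset.sum_le_sum step3
    _ = (n:ℝ) * (4 * (n:ℝ) * SGD (n+1) (mm+1) f) := by
        rw [Finset.sum_const, SGcard_pos]
        simp [nsmul_eq_mul]
    _ = 4 * (n:ℝ) ^ 2 * SGD (n+1) (mm+1) f := by ring


lemma SGtriv {s : Finset (Finset ℤ)} (f : Finset ℤ → ℝ) (h : s.card ≤ 1) :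
    (s.card : ℝ) * (∑ S ∈ s, f S ^ 2) - (∑ S ∈ s, f S) ^ 2 = 0 := by
  interval_cases h' : s.card
  · rw [Finset.card_eq_zero] at h'
    subst h'
    simp
  · rw [Finset.card_eq_one] at h'
    obtain ⟨a, rfl⟩ := h'
    simp

/-- Main combinatorial spectral-gap inequality on slices, by induction on `n`. -/
theorem SGmain : ∀ (n m : ℕ) (f : Finset ℤ → ℝ),
    ((SGsl n m).card : ℝ) * (∑ S ∈ SGsl n m, f S ^ 2) - (∑ S ∈ SGsl n m, f S) ^ 2
      ≤ 4 * (n : ℝ) ^ 2 * ((SGsl n m).card : ℝ) * SGD n m f := by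
  intro n
  induction n with
  | zero =>
      intro m f
      have hc : (SGsl 0 m).card ≤ 1 := by
        rw [SGcard_slice]
        rcases m with _ | m <;> simp
      rw [SGtriv f hc]
      have := SGD_nonneg 0 m f
      positivity
  | succ n IH =>
      intro m f
      have hRnn : 0 ≤ 4 * ((n+1 : ℕ) : ℝ) ^ 2 * ((SGsl (n+1) m).card : ℝ) * SGD (n+1) m f := by
        have := SGD_nonneg (n+1) m f
        positivity
      rcases m with _ | mm
      · -- m = 0
        have hc : (SGsl (n+1) 0).card ≤ 1 := by rw [SGcard_slice]; simp
        rw [SGtriv f hc]; exact hRnn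
      rcases Nat.lt_or_ge n mm with hbig | hmm'
      · -- slice empty
        have hc : (SGsl (n+1) (mm+1)).card ≤ 1 := by
          rw [SGcard_slice, Nat.choose_eq_zero_of_lt (by omega)]
          omega
        rw [SGtriv f hc]; exact hRnn
      rcases Nat.eq_or_lt_of_le hmm' with htop | hmm
      · -- m = n+1 : full slice, singleton
        have hc : (SGsl (n+1) (mm+1)).card ≤ 1 := by
          rw [SGcard_slice, htop, Nat.choose_self]
        rw [SGtriv f hc]; exact hRnn
      -- main case : 1 ≤ mm+1 ≤ n
      -- abbreviations
      set g : Finset ℤ → ℝ := fun T => f (insert ((n:ℤ)+1) T) with hg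
      set SA : ℝ := ∑ T ∈ SGsl n mm, g T ^ 2 with hSA
      set SB : ℝ := ∑ S ∈ SGsl n (mm+1), f S ^ 2 with hSB
      set P1 : ℝ := ∑ T ∈ SGsl n mm, g T with hP1
      set P0 : ℝ := ∑ S ∈ SGsl n (mm+1), f S with hP0
      set a1 : ℝ := ((SGsl n mm).card : ℝ) with ha1
      set a0 : ℝ := ((SGsl n (mm+1)).card : ℝ) with ha0
      set DA : ℝ := SGD n mm g with hDA
      set DB : ℝ := SGD n (mm+1) f with hDB
      set D : ℝ := SGD (n+1) (mm+1) f with hD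
      set c : ℝ := ((n - mm : ℕ) : ℝ) with hc
      set mr : ℝ := ((mm+1 : ℕ) : ℝ) with hmr
      -- sums over the big slice
      have hsum2 : ∑ S ∈ SGsl (n+1) (mm+1), f S ^ 2 = SA + SB :=
        SGsum_split n mm (fun S => f S ^ 2)
      have hsum1 : ∑ S ∈ SGsl (n+1) (mm+1), f S = P1 + P0 :=
        SGsum_split n mm f
      have hNN : ((SGsl (n+1) (mm+1)).card : ℝ) = a1 + a0 := by
        rw [ha1, ha0, SGcard_slice, SGcard_slice, SGcard_slice, Nat.choose_succ_succ]
        push_cast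
        ring
      -- positivity
      have ha1pos : 0 < a1 := by
        rw [ha1, SGcard_slice]
        exact_mod_cast Nat.choose_pos (by omega)
      have ha0pos : 0 < a0 := by
        rw [ha0, SGcard_slice]
        exact_mod_cast Nat.choose_pos (by omega)
      have hcpos : 0 < c := by
        rw [hc]
        exact_mod_cast Nat.sub_pos_of_lt hmm
      have hmrpos : 0 < mr := by
        rw [hmr]; positivity
      have hDAnn : 0 ≤ DA := SGD_nonneg _ _ _
      have hDBnn : 0 ≤ DB := SGD_nonneg _ _ _
      have hDnn : 0 ≤ D := SGD_nonneg _ _ _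
      -- induction hypotheses
      have hL1 : a1 * SA - P1 ^ 2 ≤ 4 * (n:ℝ)^2 * a1 * DA := IH mm g
      have hL2 : a0 * SB - P0 ^ 2 ≤ 4 * (n:ℝ)^2 * a0 * DB := IH (mm+1) f
      -- Dirichlet split
      have hDsplit : DA + DB ≤ D := SGD_split n mm f
      -- binomial identities
      have hK1 : c * a1 = mr * a0 := by
        rw [hc, ha1, hmr, ha0, SGcard_slice, SGcard_slice]
        have hk := congrArg (Nat.cast : ℕ → ℝ) (Nat.choose_succ_right_eq n mm)
        push_cast [Nat.cast_sub (le_of_lt hmm)] at hk ⊢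
        linarith only [hk]
      have hmrc : mr + c = (n:ℝ) + 1 := by
        rw [hmr, hc]
        push_cast [Nat.cast_sub (le_of_lt hmm)]
        ring
      -- the cross-term bound
      set Q : ℝ := c * P1 - mr * P0 with hQ
      have hQid : Q = ∑ T ∈ SGsl n mm, ∑ x ∈ SGpos n \ T, (g T - f (insert x T)) := by
        have e1 : ∑ T ∈ SGsl n mm, ∑ x ∈ SGpos n \ T, g T = c * P1 := by
          rw [hc, hP1, Finset.mul_sum]
          apply Finset.sum_congr rfl
          intro T hT
          rw [Finset.sum_const, SGcard_compl hT, nsmul_eq_mul]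
        have e2 := SGpairs_insert n mm f
        calc Q = (∑ T ∈ SGsl n mm, ∑ x ∈ SGpos n \ T, g T)
              - (∑ T ∈ SGsl n mm, ∑ x ∈ SGpos n \ T, f (insert x T)) := by
              rw [e1, e2, hQ, hmr, hP0]
          _ = ∑ T ∈ SGsl n mm, ∑ x ∈ SGpos n \ T, (g T - f (insert x T)) := by
              rw [← Finset.sum_sub_distrib]
              apply Finset.sum_congr rfl
              intro T _
              rw [← Finset.sum_sub_distrib]
      have hcardpr : (((SGsl n mm).sigma (fun T => SGpos n \ T)).card : ℝ) = a1 * c := by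
        rw [Finset.card_sigma]
        rw [Finset.sum_congr rfl (fun T hT => SGcard_compl hT), Finset.sum_const,
          smul_eq_mul]
        push_cast [ha1, hc]
        ring
      have hCS : Q ^ 2 ≤ (a1 * c) * ∑ p ∈ (SGsl n mm).sigma (fun T => SGpos n \ T),
          (g p.1 - f (insert p.2 p.1)) ^ 2 := by
        rw [hQid, Finset.sum_sigma' (SGsl n mm) (fun T => SGpos n \ T)
          (fun T x => g T - f (insert x T))]
        have := Finset.sum_mul_sq_le_sq_mul_sq
          ((SGsl n mm).sigma (fun T => SGpos n \ T))
          (fun p => g p.1 - f (insert p.2 p.1)) (fun _ => (1:ℝ))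
        simp only [mul_one, one_pow] at this
        rw [Finset.sum_const, nsmul_eq_mul, mul_one] at this
        calc (∑ p ∈ (SGsl n mm).sigma (fun T => SGpos n \ T),
              (g p.1 - f (insert p.2 p.1))) ^ 2
            ≤ (∑ p ∈ (SGsl n mm).sigma (fun T => SGpos n \ T),
              (g p.1 - f (insert p.2 p.1)) ^ 2)
              * (((SGsl n mm).sigma (fun T => SGpos n \ T)).card : ℝ) := this
          _ = (a1 * c) * ∑ p ∈ (SGsl n mm).sigma (fun T => SGpos n \ T),
              (g p.1 - f (insert p.2 p.1)) ^ 2 := by rw [hcardpr]; ring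
      have hQ2 : ∑ p ∈ (SGsl n mm).sigma (fun T => SGpos n \ T),
          (g p.1 - f (insert p.2 p.1)) ^ 2 ≤ 4 * (n:ℝ)^2 * D := by
        rw [← Finset.sum_sigma' (SGsl n mm) (fun T => SGpos n \ T)
          (fun T x => (g T - f (insert x T)) ^ 2)]
        exact SGQ2 n mm f
      have hq : Q ^ 2 ≤ (a1 * c) * (4 * (n:ℝ)^2 * D) := by
        calc Q ^ 2 ≤ (a1 * c) * ∑ p ∈ (SGsl n mm).sigma (fun T => SGpos n \ T),
              (g p.1 - f (insert p.2 p.1)) ^ 2 := hCS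
          _ ≤ (a1 * c) * (4 * (n:ℝ)^2 * D) := by
              exact mul_le_mul_of_nonneg_left hQ2 (mul_nonneg ha1pos.le hcpos.le)
      -- put everything together
      rw [hsum1, hsum2, hNN]
      set NN : ℝ := a1 + a0 with hNNd
      set X : ℝ := a0 * P1 - a1 * P0 with hX
      have hid : a1 * a0 * (NN * (SA + SB) - (P1 + P0) ^ 2)
          = a0 * NN * (a1 * SA - P1 ^ 2) + a1 * NN * (a0 * SB - P0 ^ 2) + X ^ 2 := by
        rw [hNNd, hX]; ring
      have hXQ : mr * c * X = (c * a1) * Q := by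
        rw [hX, hQ]
        linear_combination (-(c * P1)) * hK1
      have hX2 : (mr * c)^2 * X^2 = (c * a1)^2 * Q^2 := by
        have h := congrArg (fun t : ℝ => t^2) hXQ
        simpa [mul_pow] using h
      have hNN1 : ((n:ℝ)+1) * a1 = mr * NN := by
        rw [hNNd]
        linear_combination hK1 + (-a1) * hmrc
      -- scaled bound for X^2
      have hfac : (0:ℝ) < (n:ℝ) + 1 := by positivity
      have e3 : ((c*a1)^2 * ((a1*c) * (4*(n:ℝ)^2*D))) * ((n:ℝ)+1)
          = (mr*c)^2 * ((4*(n:ℝ)^2) * NN * a1 * a0 * D) := by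
        linear_combination (4*(n:ℝ)^2*D*c^2*a1^2*((n:ℝ)+1)) * hK1
          + (4*(n:ℝ)^2*D*c^2*mr*a0*a1) * hNN1
      have hX2b : (mr * c)^2 * X^2 ≤ (mr*c)^2 * ((8*(n:ℝ)+4) * NN * a1 * a0 * D) := by
        rw [hX2]
        have step : (c*a1)^2 * Q^2 ≤ (c*a1)^2 * ((a1*c) * (4*(n:ℝ)^2*D)) :=
          mul_le_mul_of_nonneg_left hq (sq_nonneg _)
        refine step.trans ?_
        have hNNnn : 0 ≤ NN := by rw [hNNd]; linarith only [ha1pos, ha0pos]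
        have hA : 0 ≤ (mr*c)^2 * NN * a1 * a0 * D :=
          mul_nonneg (mul_nonneg (mul_nonneg (mul_nonneg (sq_nonneg _) hNNnn) ha1pos.le)
            ha0pos.le) hDnn
        have hsc : 4*(n:ℝ)^2 ≤ (8*(n:ℝ)+4) * ((n:ℝ)+1) := by
          have hn0 : (0:ℝ) ≤ (n:ℝ) := Nat.cast_nonneg n
          nlinarith only [hn0, sq_nonneg ((n:ℝ)+1)]
        have e5 : (mr*c)^2 * ((4*(n:ℝ)^2) * NN * a1 * a0 * D)
            ≤ ((mr*c)^2 * ((8*(n:ℝ)+4) * NN * a1 * a0 * D)) * ((n:ℝ)+1) := by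
          calc (mr*c)^2 * ((4*(n:ℝ)^2) * NN * a1 * a0 * D)
              = (4*(n:ℝ)^2) * ((mr*c)^2 * NN * a1 * a0 * D) := by ring
            _ ≤ ((8*(n:ℝ)+4) * ((n:ℝ)+1)) * ((mr*c)^2 * NN * a1 * a0 * D) :=
                mul_le_mul_of_nonneg_right hsc hA
            _ = ((mr*c)^2 * ((8*(n:ℝ)+4) * NN * a1 * a0 * D)) * ((n:ℝ)+1) := by ring
        rw [← e3] at e5
        exact le_of_mul_le_mul_right e5 hfac
      have hmcpos : (0:ℝ) < (mr*c)^2 := pow_pos (mul_pos hmrpos hcpos) 2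
      have hXfin : X^2 ≤ (8*(n:ℝ)+4) * NN * a1 * a0 * D :=
        le_of_mul_le_mul_left hX2b hmcpos
      have hNNnn : 0 ≤ NN := by rw [hNNd]; linarith only [ha1pos, ha0pos]
      have hmono1 := mul_le_mul_of_nonneg_left hL1
        (mul_nonneg ha0pos.le hNNnn : (0:ℝ) ≤ a0 * NN)
      have hmono2 := mul_le_mul_of_nonneg_left hL2
        (mul_nonneg ha1pos.le hNNnn : (0:ℝ) ≤ a1 * NN)
      have h3 := mul_le_mul_of_nonneg_left hDsplit
        (show (0:ℝ) ≤ 4*(n:ℝ)^2 * a1 * a0 * NN from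
          mul_nonneg (mul_nonneg (mul_nonneg (by positivity) ha1pos.le) ha0pos.le) hNNnn)
      have hcomb : a1 * a0 * (NN * (SA + SB) - (P1 + P0) ^ 2)
          ≤ a1 * a0 * (4 * ((n:ℝ)+1)^2 * NN * D) := by
        rw [hid]
        linarith only [hmono1, hmono2, hXfin, h3]
      have hfinal := le_of_mul_le_mul_left
        (by calc (a1 * a0) * (NN * (SA + SB) - (P1 + P0) ^ 2)
              = a1 * a0 * (NN * (SA + SB) - (P1 + P0) ^ 2) := by ring
          _ ≤ a1 * a0 * (4 * ((n:ℝ)+1)^2 * NN * D) := hcomb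
          _ = (a1 * a0) * (4 * ((n:ℝ)+1)^2 * NN * D) := by ring)
        (mul_pos ha1pos ha0pos)
      have hcast : ((n+1:ℕ):ℝ) = (n:ℝ) + 1 := by push_cast; ring
      calc NN * (SA + SB) - (P1 + P0) ^ 2 ≤ 4 * ((n:ℝ)+1)^2 * NN * D := hfinal
        _ = 4 * ((n+1:ℕ):ℝ)^2 * NN * D := by rw [hcast]


/-- slice spectral gap with zero mean -/
theorem SGslice (n m : ℕ) (f : Finset ℤ → ℝ) (h0 : ∑ S ∈ SGsl n m, f S = 0) :
    ∑ S ∈ SGsl n m, f S ^ 2 ≤ 4 * (n : ℝ) ^ 2 * SGD n m f := by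
  have hDnn := SGD_nonneg n m f
  rcases Nat.eq_zero_or_pos (SGsl n m).card with hc | hc
  · rw [Finset.card_eq_zero] at hc
    rw [hc]
    simp only [Finset.sum_empty]
    have : (0:ℝ) ≤ 4 * (n : ℝ) ^ 2 := by positivity
    nlinarith only [this, SGD_nonneg n m f]
  · have h := SGmain n m f
    rw [h0] at h
    have hNpos : (0:ℝ) < ((SGsl n m).card : ℝ) := by exact_mod_cast hc
    have h' : ((SGsl n m).card : ℝ) * ∑ S ∈ SGsl n m, f S ^ 2
        ≤ ((SGsl n m).card : ℝ) * (4 * (n : ℝ) ^ 2 * SGD n m f) := by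
      nlinarith only [h, hNpos]
    exact le_of_mul_le_mul_left h' hNpos




/-- the cylinder event determined by `S` on coordinates `A` -/
def SGcyl (A S : Finset ℤ) : Set Cfg := {η : Cfg | ∀ x ∈ A, η x = cfgOf S x}

lemma SGcyl_measurable (A S : Finset ℤ) : MeasurableSet (SGcyl A S) := by
  have : SGcyl A S = ⋂ x ∈ (A : Set ℤ), (fun η : Cfg => η x) ⁻¹' {cfgOf S x} := by
    ext η
    simp [SGcyl]
  rw [this]
  exact MeasurableSet.biInter A.countable_toSet
    (fun x _ => (measurable_pi_apply x) (MeasurableSet.singleton _))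

lemma SGmem_cyl_iff {A S : Finset ℤ} (hS : S ∈ A.powerset) (η : Cfg) :
    η ∈ SGcyl A S ↔ S = A.filter (fun x => η x = true) := by
  rw [Finset.mem_powerset] at hS
  constructor
  · intro h
    ext z
    rw [Finset.mem_filter]
    constructor
    · intro hz
      have hzA := hS hz
      have := h z hzA
      refine ⟨hzA, ?_⟩
      rw [this, cfgOf]
      simp [hz]
    · rintro ⟨hzA, hzt⟩
      have := h z hzA
      rw [hzt, cfgOf] at this
      exact of_decide_eq_true this.symm
  · rintro rfl
    intro x hx
    rw [cfgOf]
    rcases Bool.eq_false_or_eq_true (η x) with h | h <;>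
      simp [Finset.mem_filter, hx, h]

lemma SGsum_indicator (A : Finset ℤ) (g : Cfg → ℝ) (hg : LocalOn A g) (η : Cfg) :
    g η = ∑ S ∈ A.powerset, (SGcyl A S).indicator (fun _ => g (cfgOf S)) η := by
  set T := A.filter (fun x => η x = true) with hT
  have hTmem : T ∈ A.powerset := by
    rw [Finset.mem_powerset, hT]
    exact Finset.filter_subset _ _
  rw [Finset.sum_eq_single T]
  · have : η ∈ SGcyl A T := (SGmem_cyl_iff hTmem η).mpr rfl
    rw [Set.indicator_of_mem this]
    apply hg
    intro x hx
    have : ∀ x ∈ A, cfgOf T x = η x := by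
      intro x hx
      exact ((SGmem_cyl_iff hTmem η).mpr rfl x hx).symm
    exact (this x hx).symm
  · intro S hS hne
    have : η ∉ SGcyl A S := by
      rw [SGmem_cyl_iff hS η]
      exact fun h => hne (h ▸ rfl)
    exact Set.indicator_of_notMem this _
  · intro h
    exact absurd hTmem h

/-- integral of a local function against a measure whose cylinder probabilities are given -/
lemma SGintegral_local (μ : Measure Cfg) [IsProbabilityMeasure μ] (A : Finset ℤ)
    (w : Finset ℤ → ℝ) (hw : ∀ S ∈ A.powerset, (μ (SGcyl A S)).toReal = w S)
    (g : Cfg → ℝ) (hg : LocalOn A g) :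
    ∫ η, g η ∂μ = ∑ S ∈ A.powerset, w S * g (cfgOf S) := by
  have hrep : (fun η => g η)
      = fun η => ∑ S ∈ A.powerset, (SGcyl A S).indicator (fun _ => g (cfgOf S)) η := by
    funext η
    exact SGsum_indicator A g hg η
  rw [hrep, integral_finset_sum]
  · apply Finset.sum_congr rfl
    intro S hS
    rw [integral_indicator_const _ (SGcyl_measurable A S), smul_eq_mul, Measure.real, hw S hS]
  · intro S _
    exact (integrable_const _).indicator (SGcyl_measurable A S)


lemma SGweight (ρ : ℝ) (ℓ m : ℕ) {S : Finset ℤ} (hS : S ∈ SGsl ℓ m) :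
    (∏ x ∈ Finset.Icc (1:ℤ) (ℓ:ℤ), (if cfgOf S x then ρ else 1-ρ)) = ρ^m * (1-ρ)^(ℓ-m) := by
  rw [SGsl, Finset.mem_powersetCard] at hS
  have h1 : ∀ x : ℤ, (if cfgOf S x then ρ else 1-ρ) = (if x ∈ S then ρ else (1-ρ)) := by
    intro x; simp [cfgOf]
  simp only [h1]
  rw [Finset.prod_ite, Finset.prod_const, Finset.prod_const]
  have hfeq : (Finset.Icc (1:ℤ) (ℓ:ℤ)).filter (fun x => x ∈ S) = S := by
    rw [Finset.filter_mem_eq_inter]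
    exact Finset.inter_eq_right.mpr hS.1
  have hcard2 : ((Finset.Icc (1:ℤ) (ℓ:ℤ)).filter (fun x => x ∉ S)).card = ℓ - m := by
    have := Finset.card_filter_add_card_filter_not
      (s := Finset.Icc (1:ℤ) (ℓ:ℤ)) (p := fun x => x ∈ S)
    rw [hfeq, hS.2] at this
    have hl : (Finset.Icc (1:ℤ) (ℓ:ℤ)).card = ℓ := SGcard_pos ℓ
    omega
  rw [hfeq, hS.2, hcard2]

/-- `φ_f ≡ 0` on `[0,1]` forces all slice sums to vanish -/
lemma SGslice_sum_zero (ℓ : ℕ) (f : Cfg → ℝ)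
    (hphi : ∀ β ∈ Set.Icc (0:ℝ) 1, phi (Finset.Icc (1:ℤ) (ℓ:ℤ)) f β = 0)
    (m : ℕ) (hm : m ≤ ℓ) :
    ∑ S ∈ SGsl ℓ m, f (cfgOf S) = 0 := by
  set c : ℕ → ℝ := fun k => ∑ S ∈ SGsl ℓ k, f (cfgOf S) with hcdef
  set P : Polynomial ℝ := ∑ k ∈ Finset.range (ℓ+1), Polynomial.C (c k) * Polynomial.X ^ k
    with hPdef
  have hA : (Finset.Icc (1:ℤ) (ℓ:ℤ)).card = ℓ := SGcard_pos ℓ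
  have heval : ∀ t : ℝ, 0 ≤ t → Polynomial.eval t P = 0 := by
    intro t ht
    have h1t : (0:ℝ) < 1 + t := by linarith
    set β : ℝ := t / (1+t) with hβ
    have hβmem : β ∈ Set.Icc (0:ℝ) 1 := by
      constructor
      · positivity
      · rw [hβ, div_le_one h1t]; linarith
    have h1mβ : 1 - β = 1 / (1+t) := by
      rw [hβ]; field_simp; ring
    have hkey : Polynomial.eval t P = (1+t)^ℓ * phi (Finset.Icc (1:ℤ) (ℓ:ℤ)) f β := by
      rw [phi, Finset.sum_powerset (Finset.Icc (1:ℤ) (ℓ:ℤ))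
        (fun S => β ^ S.card * (1 - β) ^ ((Finset.Icc (1:ℤ) (ℓ:ℤ)).card - S.card) * f (cfgOf S)),
        hA, Finset.mul_sum]
      rw [hPdef, Polynomial.eval_finset_sum]
      apply Finset.sum_congr rfl
      intro k hk
      rw [Finset.mem_range] at hk
      have hkℓ : k ≤ ℓ := by omega
      simp only [Polynomial.eval_mul, Polynomial.eval_C, Polynomial.eval_pow, Polynomial.eval_X]
      rw [hcdef]
      simp only [Finset.mul_sum, Finset.sum_mul]
      apply Finset.sum_congr rfl
      intro S hS
      have hScard : S.card = k := (Finset.mem_powersetCard.mp hS).2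
      rw [hScard, h1mβ, hβ]
      rw [div_pow, div_pow, one_pow]
      have hne : (1+t)^k ≠ 0 := by positivity
      have hne2 : (1+t)^(ℓ-k) ≠ 0 := by positivity
      have hpow : (1+t)^k * (1+t)^(ℓ-k) = (1+t)^ℓ := by
        rw [← pow_add]
        congr 1
        omega
      field_simp
      rw [← hpow]
      ring
    rw [hphi β hβmem, mul_zero] at hkey
    exact hkey
  have hroots : {x : ℝ | P.IsRoot x}.Infinite := by
    apply Set.Infinite.mono (s := Set.Ici (0:ℝ))
    · intro t ht
      exact heval t ht
    · exact Set.Ici_infinite 0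
  have hP0 : P = 0 := Polynomial.eq_zero_of_infinite_isRoot P hroots
  have hcoeff : P.coeff m = c m := by
    rw [hPdef, Polynomial.finset_sum_coeff]
    rw [Finset.sum_eq_single m]
    · rw [Polynomial.coeff_C_mul, Polynomial.coeff_X_pow]
      simp
    · intro k _ hk
      rw [Polynomial.coeff_C_mul, Polynomial.coeff_X_pow]
      simp [Ne.symm hk]
    · intro h
      exact absurd (Finset.mem_range.mpr (by omega)) h
  have hfin : c m = 0 := by
    rw [← hcoeff, hP0]
    simp
  exact hfin


lemma SGswapCfg_cfgOf (x y : ℤ) (S : Finset ℤ) :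
    swapCfg x y (cfgOf S) = cfgOf (SGsw x y S) := by
  funext z
  have hdec : cfgOf (SGsw x y S) z = decide (Equiv.swap x y z ∈ S) := by
    rw [cfgOf]
    exact decide_eq_decide.mpr SGmem_sw
  rw [hdec, swapCfg]
  by_cases h1 : z = x
  · subst h1
    simp [Equiv.swap_apply_left, cfgOf]
  by_cases h2 : z = y
  · subst h2
    simp [h1, Equiv.swap_apply_right, cfgOf]
  · simp [h1, h2, Equiv.swap_apply_of_ne_of_ne h1 h2, cfgOf]

lemma SGdiscGrad_eval (x y : ℤ) (f : Cfg → ℝ) (S : Finset ℤ) :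
    discGrad x y f (cfgOf S) = f (cfgOf (SGsw x y S)) - f (cfgOf S) := by
  rw [discGrad, SGswapCfg_cfgOf]

lemma SGdiscGrad_local {A : Finset ℤ} {x y : ℤ} (hx : x ∈ A) (hy : y ∈ A) {f : Cfg → ℝ}
    (hf : LocalOn A f) : LocalOn A (fun η => (discGrad x y f η) ^ 2) := by
  intro η ξ h
  simp only [discGrad]
  have h1 : f (swapCfg x y η) = f (swapCfg x y ξ) := by
    apply hf
    intro z hz
    simp only [swapCfg]
    split_ifs
    · exact h y hy
    · exact h x hx
    · exact h z hz
  rw [h1, hf η ξ h]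

end SGHelpers
/-- **Spectral gap inequality for symmetric simple exclusion on a segment**
(Proposition 4.3). There is a universal constant `κ₀` such that for every `ℓ`, every
`ρ ∈ [0,1]` and every local `f` with support in `{1,…,ℓ}` and `φ_f(β) = 0` for all
`β ∈ [0,1]`, `∫ f² dν_ρ ≤ κ₀ ℓ² E_ℓ(f)` where
`E_ℓ(f) = ∑_{x=1}^{ℓ−1} ∫ (∇_{x,x+1} f)² dν_ρ`. -/
theorem spectral_gap_exclusion :
    ∃ κ₀ : ℝ, ∀ (ℓ : ℕ) (ρ : ℝ), ρ ∈ Set.Icc (0 : ℝ) 1 →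
      ∀ μ : Measure Cfg, IsBernoulliProduct ρ μ →
        ∀ f : Cfg → ℝ, LocalOn (Finset.Icc (1 : ℤ) (ℓ : ℤ)) f →
          (∀ β ∈ Set.Icc (0 : ℝ) 1, phi (Finset.Icc (1 : ℤ) (ℓ : ℤ)) f β = 0) →
          ∫ η, f η ^ 2 ∂μ
            ≤ κ₀ * (ℓ : ℝ) ^ 2
                * ∑ x ∈ Finset.Ico (1 : ℤ) (ℓ : ℤ),
                    ∫ η, (discGrad x (x + 1) f η) ^ 2 ∂μ := by
  classical
  refine ⟨4, ?_⟩
  intro ℓ ρ hρ μ hμ f hloc hphi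
  haveI hPμ : IsProbabilityMeasure μ := hμ.1
  set F : Finset ℤ → ℝ := fun S => f (cfgOf S) with hF
  have hA : (Finset.Icc (1:ℤ) (ℓ:ℤ)).card = ℓ := SGcard_pos ℓ
  have hw : ∀ S ∈ (Finset.Icc (1:ℤ) (ℓ:ℤ)).powerset,
      (μ (SGcyl (Finset.Icc (1:ℤ) (ℓ:ℤ)) S)).toReal
        = ∏ x ∈ Finset.Icc (1:ℤ) (ℓ:ℤ), (if cfgOf S x then ρ else 1-ρ) :=
    fun S _ => hμ.2 _ (cfgOf S)
  have hwm_nonneg : ∀ m : ℕ, 0 ≤ ρ^m * (1-ρ)^(ℓ-m) := by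
    intro m
    have h1 : (0:ℝ) ≤ ρ := hρ.1
    have h2 : (0:ℝ) ≤ 1 - ρ := by linarith [hρ.2]
    exact mul_nonneg (pow_nonneg h1 m) (pow_nonneg h2 (ℓ-m))
  -- left-hand side
  have hloc2 : LocalOn (Finset.Icc (1:ℤ) (ℓ:ℤ)) (fun η => f η ^ 2) := by
    intro η ξ h
    simp only
    rw [hloc η ξ h]
  have hLHS : ∫ η, f η ^ 2 ∂μ
      = ∑ m ∈ Finset.range (ℓ+1), ρ^m * (1-ρ)^(ℓ-m) * ∑ S ∈ SGsl ℓ m, F S ^ 2 := by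
    rw [SGintegral_local μ (Finset.Icc (1:ℤ) (ℓ:ℤ)) _ hw _ hloc2]
    rw [Finset.sum_powerset (Finset.Icc (1:ℤ) (ℓ:ℤ))
      (fun S => (∏ x ∈ Finset.Icc (1:ℤ) (ℓ:ℤ), (if cfgOf S x then ρ else 1-ρ))
        * f (cfgOf S) ^ 2), hA]
    apply Finset.sum_congr rfl
    intro m _
    rw [Finset.mul_sum]
    apply Finset.sum_congr rfl
    intro S hS
    rw [SGweight ρ ℓ m hS]
  -- right-hand side, per edge
  have hRHSx : ∀ x ∈ Finset.Ico (1:ℤ) (ℓ:ℤ),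
      ∫ η, (discGrad x (x+1) f η) ^ 2 ∂μ
        = ∑ m ∈ Finset.range (ℓ+1), ρ^m * (1-ρ)^(ℓ-m) * SGE ℓ m F x := by
    intro x hx
    rw [Finset.mem_Ico] at hx
    have hxA : x ∈ Finset.Icc (1:ℤ) (ℓ:ℤ) := by
      rw [Finset.mem_Icc]; omega
    have hx1A : x + 1 ∈ Finset.Icc (1:ℤ) (ℓ:ℤ) := by
      rw [Finset.mem_Icc]; omega
    have hlocg := SGdiscGrad_local hxA hx1A hloc
    rw [SGintegral_local μ (Finset.Icc (1:ℤ) (ℓ:ℤ)) _ hw _ hlocg]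
    rw [Finset.sum_powerset (Finset.Icc (1:ℤ) (ℓ:ℤ))
      (fun S => (∏ y ∈ Finset.Icc (1:ℤ) (ℓ:ℤ), (if cfgOf S y then ρ else 1-ρ))
        * (discGrad x (x+1) f (cfgOf S)) ^ 2), hA]
    apply Finset.sum_congr rfl
    intro m _
    rw [SGE, Finset.mul_sum]
    apply Finset.sum_congr rfl
    intro S hS
    rw [SGweight ρ ℓ m hS, SGdiscGrad_eval]
  -- the slice estimate
  have hslice : ∀ m ∈ Finset.range (ℓ+1),
      ρ^m * (1-ρ)^(ℓ-m) * ∑ S ∈ SGsl ℓ m, F S ^ 2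
        ≤ ρ^m * (1-ρ)^(ℓ-m) * (4 * (ℓ:ℝ)^2 * SGD ℓ m F) := by
    intro m hm
    rw [Finset.mem_range] at hm
    apply mul_le_mul_of_nonneg_left _ (hwm_nonneg m)
    apply SGslice
    exact SGslice_sum_zero ℓ f hphi m (by omega)
  -- assemble
  calc ∫ η, f η ^ 2 ∂μ
      = ∑ m ∈ Finset.range (ℓ+1), ρ^m * (1-ρ)^(ℓ-m) * ∑ S ∈ SGsl ℓ m, F S ^ 2 := hLHS
    _ ≤ ∑ m ∈ Finset.range (ℓ+1), ρ^m * (1-ρ)^(ℓ-m) * (4 * (ℓ:ℝ)^2 * SGD ℓ m F) :=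
        Finset.sum_le_sum hslice
    _ = 4 * (ℓ:ℝ)^2 * ∑ m ∈ Finset.range (ℓ+1), ρ^m * (1-ρ)^(ℓ-m) * SGD ℓ m F := by
        rw [Finset.mul_sum]
        apply Finset.sum_congr rfl
        intro m _
        ring
    _ = 4 * (ℓ:ℝ)^2 * ∑ x ∈ Finset.Ico (1:ℤ) (ℓ:ℤ), ∫ η, (discGrad x (x+1) f η) ^ 2 ∂μ := by
        congr 1
        rw [Finset.sum_congr rfl hRHSx]
        rw [Finset.sum_comm]
        apply Finset.sum_congr rfl
        intro m _
        rw [SGD, Finset.mul_sum]
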